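/- Let p be a prime, q a power of p, W a nonzero finite-dimensional vector space over 𝔽_q, and Q ≤ H ≤ GL(W) with Q a finite p-group such that the fixed subspace Φ of Q is one-dimensional; let M_H be the span of all H-translates of Φ. Let ⟨·,·⟩ be a nonzero H-invariant symmetric bilinear form on W (i.e. ⟨u•x, v•x⟩ = ⟨u,v⟩ for all x ∈ H). Then exactly one of the following holds: (i) M_H is isotropic, i.e. M_H ⊆ M_H^⊥; (ii) M_H = W (i.e. H acts irreducibly on W). -/

import Mathlib

/-- The subspace of vectors fixed by every element of a subgroup `Q` of the
linear automorphism group of `W`. -/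
def fixedSubmodule (F W : Type*) [Field F] [AddCommGroup W] [Module F W]
    (Q : Subgroup (W ≃ₗ[F] W)) : Submodule F W where
  carrier := {w | ∀ g ∈ Q, g w = w}
  add_mem' := by
    intro u v hu hv g hg
    rw [map_add, hu g hg, hv g hg]
  zero_mem' := by
    intro g hg
    exact map_zero g
  smul_mem' := by
    intro t u hu g hg
    rw [map_smul, hu g hg]

/-- The span of all `H`-translates of the fixed space of `Q`. -/
def closureOfFixed (F W : Type*) [Field F] [AddCommGroup W] [Module F W]
    (Q H : Subgroup (W ≃ₗ[F] W)) : Submodule F W :=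
  Submodule.span F {w : W | ∃ v ∈ fixedSubmodule F W Q, ∃ x ∈ H, w = x v}

section aux

variable {F W : Type*} [Field F] [AddCommGroup W] [Module F W]

/-- `closureOfFixed` is invariant under `H`. -/
lemma closureOfFixed_invariant (Q H : Subgroup (W ≃ₗ[F] W)) (x : W ≃ₗ[F] W) (hx : x ∈ H)
    {w : W} (hw : w ∈ closureOfFixed F W Q H) : x w ∈ closureOfFixed F W Q H := by
  set S := {w : W | ∃ v ∈ fixedSubmodule F W Q, ∃ y ∈ H, w = y v} with hS
  have h1 : Submodule.span F ((x : W →ₗ[F] W) '' S) ≤ closureOfFixed F W Q H := by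
    rw [Submodule.span_le]
    rintro _ ⟨_, ⟨v, hv, y, hy, rfl⟩, rfl⟩
    refine Submodule.subset_span ⟨v, hv, x * y, mul_mem hx hy, ?_⟩
    simp only [LinearEquiv.coe_coe]
    rfl
  have h2 : x w ∈ Submodule.map (x : W →ₗ[F] W) (closureOfFixed F W Q H) := ⟨w, hw, rfl⟩
  rw [closureOfFixed, Submodule.map_span] at h2
  exact h1 h2

end aux

/-- If `Q ≤ H ≤ GL(W)` with `Q` a finite `p`-group whose fixed space is
one-dimensional, and `B` is a nonzero `H`-invariant symmetric bilinear form on `W`,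
then exactly one of the following holds: `M_H` is isotropic (`M_H ⊆ M_H^⊥`), or
`M_H = W` (`H` acts irreducibly). -/
theorem closureOfFixed_isotropic_xor_irreducible
    (p : ℕ) (hp : p.Prime) (F : Type*) [Field F] [Fintype F]
    (hq : ∃ n : ℕ, 0 < n ∧ Fintype.card F = p ^ n)
    (W : Type*) [AddCommGroup W] [Module F W] [FiniteDimensional F W] [Nontrivial W]
    (Q H : Subgroup (W ≃ₗ[F] W)) [Finite Q] (hQ : IsPGroup p Q) (hQH : Q ≤ H)
    (hfix : Module.finrank F ↥(fixedSubmodule F W Q) = 1)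
    (B : W →ₗ[F] W →ₗ[F] F)
    (hsymm : ∀ u v : W, B u v = B v u)
    (hB : B ≠ 0)
    (hinv : ∀ x ∈ H, ∀ u v : W, B (x u) (x v) = B u v) :
    Xor' (∀ u ∈ closureOfFixed F W Q H, ∀ v ∈ closureOfFixed F W Q H, B u v = 0)
      (closureOfFixed F W Q H = ⊤) := by
  classical
  haveI : Fact p.Prime := ⟨hp⟩
  set M := closureOfFixed F W Q H with hMdef
  -- the two alternatives are mutually exclusive
  have hnotboth : (∀ u ∈ M, ∀ v ∈ M, B u v = 0) → M ≠ ⊤ := by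
    intro hiso htop
    apply hB
    ext u v
    exact hiso u (htop ▸ Submodule.mem_top) v (htop ▸ Submodule.mem_top)
  by_cases hiso : ∀ u ∈ M, ∀ v ∈ M, B u v = 0
  · exact Or.inl ⟨hiso, hnotboth hiso⟩
  · refine Or.inr ⟨?_, hiso⟩
    push_neg at hiso
    obtain ⟨u, hu, v, hv, huv⟩ := hiso
    -- the "perp" of M
    set N : Submodule F W := LinearMap.ker (B.domRestrict₂ M) with hNdef
    have hmemN : ∀ w : W, w ∈ N ↔ ∀ m ∈ M, B w m = 0 := by
      intro w
      constructor
      · intro hw m hm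
        have := LinearMap.congr_fun (LinearMap.mem_ker.mp hw) ⟨m, hm⟩
        simpa [LinearMap.domRestrict₂_apply] using this
      · intro h
        rw [LinearMap.mem_ker]
        ext ⟨m, hm⟩
        simpa [LinearMap.domRestrict₂_apply] using h m hm
    -- there is a fixed vector φ0 and m0 ∈ M with B φ0 m0 ≠ 0
    have hstep1 : ∃ φ0 ∈ fixedSubmodule F W Q, ∃ m0 ∈ M, B φ0 m0 ≠ 0 := by
      by_contra hcon
      push_neg at hcon
      have hSN : {w : W | ∃ v ∈ fixedSubmodule F W Q, ∃ x ∈ H, w = x v} ⊆ (N : Set W) := by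
        rintro _ ⟨φ, hφ, x, hx, rfl⟩
        rw [SetLike.mem_coe, hmemN]
        intro m hm
        have h1 : B (x φ) (x (x⁻¹ m)) = B φ (x⁻¹ m) := hinv x hx φ (x⁻¹ m)
        have h2 : x (x⁻¹ m) = m := x.apply_symm_apply m
        rw [h2] at h1
        rw [h1]
        exact hcon φ hφ (x⁻¹ m) (closureOfFixed_invariant Q H x⁻¹ (inv_mem hx) hm)
      have hMN : M ≤ N := Submodule.span_le.mpr hSN
      exact huv ((hmemN u).mp (hMN hu) v hv)
    obtain ⟨φ0, hφ0, m0, hm0, hBφ0⟩ := hstep1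
    have hφ0ne : φ0 ≠ 0 := by
      intro h
      apply hBφ0
      rw [h]
      simp
    -- suppose M ≠ ⊤
    by_contra hMtop
    -- then N ≠ ⊥ by dimension count
    haveI : Finite W := Module.finite_of_finite F
    haveI : Fintype W := Fintype.ofFinite W
    have hrankM : Module.finrank F M < Module.finrank F W :=
      Submodule.finrank_lt hMtop
    have hNpos : 0 < Module.finrank F N := by
      have h1 : Module.finrank F (LinearMap.range (B.domRestrict₂ M))
          + Module.finrank F N = Module.finrank F W :=
        LinearMap.finrank_range_add_finrank_ker _
      have h2 : Module.finrank F (LinearMap.range (B.domRestrict₂ M))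
          ≤ Module.finrank F (↥M →ₗ[F] F) := Submodule.finrank_le _
      have h3 : Module.finrank F (↥M →ₗ[F] F) = Module.finrank F M :=
        Subspace.dual_finrank_eq
      omega
    -- N is Q-invariant
    have hNinv : ∀ g : Q, ∀ w ∈ N, (g : W ≃ₗ[F] W) w ∈ N := by
      rintro ⟨g, hg⟩ w hw
      rw [hmemN] at hw ⊢
      intro m hm
      have h2 : g (g⁻¹ m) = m := g.apply_symm_apply m
      calc B (g w) m = B (g w) (g (g⁻¹ m)) := by rw [h2]
        _ = B w (g⁻¹ m) := hinv g (hQH hg) w (g⁻¹ m)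
        _ = 0 := hw _ (closureOfFixed_invariant Q H g⁻¹ (inv_mem (hQH hg)) hm)
    -- Q acts on N
    letI : SMul Q N := ⟨fun g w => ⟨(g : W ≃ₗ[F] W) w, hNinv g w w.2⟩⟩
    have smul_def : ∀ (g : Q) (w : N), ((g • w : N) : W) = (g : W ≃ₗ[F] W) (w : W) :=
      fun _ _ => rfl
    letI : MulAction Q N :=
      { one_smul := fun w => by
          apply Subtype.ext
          rw [smul_def]
          rfl
        mul_smul := fun g h w => by
          apply Subtype.ext
          rw [smul_def, smul_def, smul_def]
          rfl }
    -- p divides the cardinality of N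
    obtain ⟨n, hn, hcard⟩ := hq
    have hcardN : p ∣ Nat.card N := by
      haveI : Fintype N := Fintype.ofFinite N
      rw [Nat.card_eq_fintype_card, Module.card_eq_pow_finrank (K := F) (V := N), hcard, ← pow_mul]
      exact dvd_pow_self p (by positivity)
    -- 0 is a fixed point; get another fixed point
    have h0fix : (0 : N) ∈ MulAction.fixedPoints Q N := by
      intro g
      apply Subtype.ext
      rw [smul_def]
      simp
    obtain ⟨b, hbfix, hbne⟩ :=
      hQ.exists_fixed_point_of_prime_dvd_card_of_fixed_point N hcardN h0fix
    -- b is a nonzero element of the fixed submodule inside N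
    have hbΦ : (b : W) ∈ fixedSubmodule F W Q := by
      intro g hg
      have := hbfix ⟨g, hg⟩
      have := congrArg Subtype.val this
      rw [smul_def] at this
      exact this
    have hbne' : (b : W) ≠ 0 := fun h => hbne (Subtype.ext (by simp [h]))
    -- Φ is spanned by φ0
    have hspan : fixedSubmodule F W Q = Submodule.span F {φ0} := by
      symm
      apply Submodule.eq_of_le_of_finrank_le
      · rw [Submodule.span_le, Set.singleton_subset_iff]; exact hφ0
      · rw [hfix, finrank_span_singleton hφ0ne]
    have hbmem : (b : W) ∈ Submodule.span F {φ0} := hspan ▸ hbΦ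
    obtain ⟨c, hc⟩ := Submodule.mem_span_singleton.mp hbmem
    have hcne : c ≠ 0 := by
      rintro rfl
      rw [zero_smul] at hc
      exact hbne' hc.symm
    have : B (b : W) m0 = 0 := (hmemN _).mp b.2 m0 hm0
    rw [← hc, map_smul] at this
    simp only [LinearMap.smul_apply, smul_eq_mul] at this
    exact hBφ0 (by
      rcases mul_eq_zero.mp this with h | h
      · exact absurd h hcne
      · exact h)
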